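/- Let G be a 3-connected simple graph of order n in which every edge lies in a triangle. Then e(G) ≥ 2n − 2. -/

import Mathlib

/-- Number of edges of a simple graph. -/
noncomputable def numEdges {V : Type*} (G : SimpleGraph V) : ℕ := Nat.card G.edgeSet

/-- Every edge of `G` lies in a triangle. -/
def EveryEdgeInTriangle {V : Type*} (G : SimpleGraph V) : Prop :=
  ∀ ⦃u v : V⦄, G.Adj u v → ∃ w, G.Adj u w ∧ G.Adj v w

/-- `G` is 2-connected: it has at least 3 vertices and deleting any single vertex
leaves a connected graph. -/
def TwoConnected {V : Type*} (G : SimpleGraph V) : Prop :=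
  3 ≤ Nat.card V ∧ ∀ v : V, (G.induce ({v}ᶜ : Set V)).Connected

/-- `G` is 3-connected: it has at least 4 vertices and deleting any set of at most 2
vertices leaves a connected graph. -/
def ThreeConnected {V : Type*} (G : SimpleGraph V) : Prop :=
  4 ≤ Nat.card V ∧ ∀ S : Set V, S.ncard ≤ 2 → (G.induce (Sᶜ : Set V)).Connected

/-- `G` is edge-pancyclic: every edge lies in a cycle of each length `k` with `3 ≤ k ≤ |V|`. -/
def EdgePancyclic {V : Type*} (G : SimpleGraph V) : Prop :=
  ∀ k : ℕ, 3 ≤ k → k ≤ Nat.card V → ∀ ⦃u v : V⦄, G.Adj u v →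
    ∃ c : G.Walk u u, c.IsCycle ∧ c.length = k ∧ s(u, v) ∈ c.edges

/-- Base relation for the graph `A_n` (`n = 2q`): vertices `inl i` are the cycle
vertices `vᵢ`, vertices `inr i` are the added vertices `uᵢ`; `vᵢ ~ vᵢ₊₁`,
`uᵢ ~ vᵢ` and `uᵢ ~ vᵢ₊₁`. -/
def ARel (q : ℕ) : (ZMod q ⊕ ZMod q) → (ZMod q ⊕ ZMod q) → Prop :=
  fun x y => match x, y with
    | Sum.inl a, Sum.inl b => a = b + 1
    | Sum.inr a, Sum.inl b => b = a ∨ b = a + 1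
    | _, _ => False

/-- The graph `A_n` where `n = 2q`. -/
def graphA (q : ℕ) : SimpleGraph (ZMod q ⊕ ZMod q) := SimpleGraph.fromRel (ARel q)

/-- The graph `F_n` where `n = 2q + 1`: `A_{n-1}` plus a new vertex (`none`)
adjacent to `v₁` and `v₂`. -/
def graphF (q : ℕ) : SimpleGraph (Option (ZMod q ⊕ ZMod q)) :=
  SimpleGraph.fromRel (fun x y => match x, y with
    | some a, some b => ARel q a b
    | none, some w => w = Sum.inl 1 ∨ w = Sum.inl 2
    | _, _ => False)

/-- The graph `G_n` where `n = 2q + 1`: `A_{n-1}` plus a new vertex (`none`)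
adjacent to `u₁` and `v₁`. -/
def graphG (q : ℕ) : SimpleGraph (Option (ZMod q ⊕ ZMod q)) :=
  SimpleGraph.fromRel (fun x y => match x, y with
    | some a, some b => ARel q a b
    | none, some w => w = Sum.inr 1 ∨ w = Sum.inl 1
    | _, _ => False)

/-- The graph `H_n` where `n = 2q + 1`: `A_{n-1}` with the edge `v₁v₂` subdivided by a
new vertex (`none`), which is moreover joined to `u₁`. -/
def graphH (q : ℕ) : SimpleGraph (Option (ZMod q ⊕ ZMod q)) :=
  SimpleGraph.fromRel (fun x y => match x, y with
    | some (Sum.inl a), some (Sum.inl b) =>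
        a = b + 1 ∧ ¬(a = 2 ∧ b = 1) ∧ ¬(a = 1 ∧ b = 2)
    | some a, some b => ARel q a b
    | none, some w => w = Sum.inl 1 ∨ w = Sum.inl 2 ∨ w = Sum.inr 1
    | _, _ => False)

/-- The wheel graph of order `n`: the hub `none` joined to every vertex of the
cycle `C_{n-1}` on `ZMod (n-1)`. -/
def wheelGraph (n : ℕ) : SimpleGraph (Option (ZMod (n - 1))) :=
  SimpleGraph.fromRel (fun x y => match x, y with
    | some a, some b => a = b + 1
    | none, some _ => True
    | _, _ => False)
section Statement3Proof

open SimpleGraph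

universe u

variable {V : Type u}

/-- The reduced graph: delete `v` and make its neighborhood a clique. -/
private def reduceG (G : SimpleGraph V) (v : V) : SimpleGraph {x : V // x ≠ v} where
  Adj x y := (G.Adj x y ∨ (G.Adj v x ∧ G.Adj v y)) ∧ (x : V) ≠ (y : V)
  symm := by
    constructor
    rintro x y ⟨h | ⟨h1, h2⟩, hne⟩
    · exact ⟨Or.inl h.symm, hne.symm⟩
    · exact ⟨Or.inr ⟨h2, h1⟩, hne.symm⟩
  loopless := by constructor; rintro x ⟨_, h⟩; exact h rfl

private lemma deg_ge_three (G : SimpleGraph V) [Fintype V] [DecidableRel G.Adj]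
    (h3 : ThreeConnected G) (v : V) : 3 ≤ G.degree v := by
  by_contra h
  push_neg at h
  have hns : (G.neighborSet v).ncard = G.degree v := by
    rw [Set.ncard_eq_toFinset_card']
    rfl
  have hS : (G.neighborSet v).ncard ≤ 2 := by omega
  have hcon := h3.2 (G.neighborSet v) hS
  have hv : v ∈ (G.neighborSet v)ᶜ := by
    simp [SimpleGraph.mem_neighborSet]
  have hne_univ : (G.neighborSet v ∪ {v} : Set V) ≠ Set.univ := by
    intro hU
    have h1 : (G.neighborSet v ∪ {v} : Set V).ncard ≤ 3 := by
      refine le_trans (Set.ncard_union_le _ _) ?_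
      have := Set.ncard_singleton v
      omega
    rw [hU, Set.ncard_univ] at h1
    have := h3.1
    omega
  obtain ⟨u, hu⟩ := (Set.ne_univ_iff_exists_notMem _).mp hne_univ
  have huc : u ∈ (G.neighborSet v)ᶜ := fun hmem => hu (Or.inl hmem)
  have hune : u ≠ v := fun h => hu (Or.inr (by simp [h]))
  have hr := hcon.preconnected ⟨v, hv⟩ ⟨u, huc⟩
  rw [SimpleGraph.reachable_iff_reflTransGen] at hr
  rcases hr.cases_head with heq | ⟨z, hadj, _⟩
  · exact hune (congrArg Subtype.val heq).symm
  · have hz : G.Adj v z.1 := hadj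
    exact z.2 hz

private lemma handshake_ge (G : SimpleGraph V) [Fintype V] [DecidableRel G.Adj]
    (k : ℕ) (h : ∀ v, k ≤ G.degree v) :
    Fintype.card V * k ≤ 2 * Nat.card G.edgeSet := by
  classical
  have h1 : Fintype.card V * k ≤ ∑ v, G.degree v := by
    calc Fintype.card V * k = ∑ _v : V, k := by
          rw [Finset.sum_const, Finset.card_univ, smul_eq_mul]
      _ ≤ ∑ v, G.degree v := Finset.sum_le_sum (fun v _ => h v)
  rw [SimpleGraph.sum_degrees_eq_twice_card_edges] at h1
  have h2 : Nat.card G.edgeSet = G.edgeFinset.card := by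
    rw [Nat.card_coe_set_eq, Set.ncard_eq_toFinset_card']
    convert rfl
    ext e; simp
  omega

private lemma reduceG_threeConnected (G : SimpleGraph V) [Fintype V] [DecidableRel G.Adj]
    (h3 : ThreeConnected G) (hn5 : 5 ≤ Nat.card V) (v : V)
    (hcard : 4 ≤ Nat.card {x : V // x ≠ v}) :
    ThreeConnected (reduceG G v) := by
  classical
  refine ⟨hcard, ?_⟩
  intro S' hS'
  set S : Set V := Subtype.val '' S' with hSdef
  have hScard : S.ncard ≤ 2 := by
    rw [hSdef, Set.ncard_image_of_injective _ Subtype.val_injective]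
    exact hS'
  have hcon := h3.2 S hScard
  have hdeg := deg_ge_three G h3 v
  -- pick a neighbor of v avoiding S
  have hex : ∃ a₀, G.Adj v a₀ ∧ a₀ ∉ S := by
    by_contra hcontra
    push_neg at hcontra
    have hsub : G.neighborSet v ⊆ S := fun x hx => hcontra x hx
    have h1 := Set.ncard_le_ncard hsub (Set.toFinite S)
    have hns : (G.neighborSet v).ncard = G.degree v := by
      rw [Set.ncard_eq_toFinset_card']; rfl
    omega
  obtain ⟨a₀, hva₀, ha₀S⟩ := hex
  have ha₀v : a₀ ≠ v := fun h => G.loopless.irrefl v (h ▸ hva₀)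
  have hS'mem : ∀ (x : V) (hxv : x ≠ v), x ∉ S → (⟨x, hxv⟩ : {x : V // x ≠ v}) ∈ S'ᶜ :=
    fun x hxv hxS h => hxS ⟨⟨x, hxv⟩, h, rfl⟩
  have hback : ∀ (p : {y : {x : V // x ≠ v} // y ∈ S'ᶜ}), (p.1.1 : V) ∈ Sᶜ := by
    intro p hmem
    obtain ⟨s, hs, hval⟩ := hmem
    have : s = p.1 := Subtype.val_injective hval
    exact p.2 (this ▸ hs)
  let φ : ↥(Sᶜ) → {y : {x : V // x ≠ v} // y ∈ S'ᶜ} := fun u =>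
    if h : u.1 = v then ⟨⟨a₀, ha₀v⟩, hS'mem a₀ ha₀v ha₀S⟩
    else ⟨⟨u.1, h⟩, hS'mem u.1 h u.2⟩
  have hstep : ∀ u w : ↥(Sᶜ), (G.induce Sᶜ).Adj u w →
      ((reduceG G v).induce S'ᶜ).Reachable (φ u) (φ w) := by
    intro u w huw
    have hGuw : G.Adj u.1 w.1 := huw
    by_cases hu : u.1 = v
    · by_cases hw : w.1 = v
      · rw [hu, hw] at hGuw; exact absurd hGuw (G.loopless.irrefl v)
      · have hvw : G.Adj v w.1 := hu ▸ hGuw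
        by_cases hwa : w.1 = a₀
        · have : φ u = φ w := by
            simp only [φ, dif_pos hu, dif_neg hw]
            exact Subtype.ext (Subtype.ext hwa.symm)
          rw [this]
        · refine SimpleGraph.Adj.reachable ?_
          simp only [φ, dif_pos hu, dif_neg hw]
          show (reduceG G v).Adj ⟨a₀, ha₀v⟩ ⟨w.1, hw⟩
          exact ⟨Or.inr ⟨hva₀, hvw⟩, fun h => hwa h.symm⟩
    · by_cases hw : w.1 = v
      · have hvu : G.Adj v u.1 := (hw ▸ hGuw).symm
        by_cases hua : u.1 = a₀
        · have : φ u = φ w := by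
            simp only [φ, dif_neg hu, dif_pos hw]
            exact Subtype.ext (Subtype.ext hua)
          rw [this]
        · refine SimpleGraph.Adj.reachable ?_
          simp only [φ, dif_neg hu, dif_pos hw]
          show (reduceG G v).Adj ⟨u.1, hu⟩ ⟨a₀, ha₀v⟩
          exact ⟨Or.inr ⟨hvu, hva₀⟩, hua⟩
      · refine SimpleGraph.Adj.reachable ?_
        simp only [φ, dif_neg hu, dif_neg hw]
        show (reduceG G v).Adj ⟨u.1, hu⟩ ⟨w.1, hw⟩
        exact ⟨Or.inl hGuw, hGuw.ne⟩
  haveI : Nonempty {y : {x : V // x ≠ v} // y ∈ S'ᶜ} := ⟨⟨⟨a₀, ha₀v⟩, hS'mem a₀ ha₀v ha₀S⟩⟩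
  refine SimpleGraph.Connected.mk ?_
  · intro p q
    have hr := hcon.preconnected ⟨p.1.1, hback p⟩ ⟨q.1.1, hback q⟩
    rw [SimpleGraph.reachable_iff_reflTransGen] at hr
    have main : ∀ (uu ww : ↥(Sᶜ)), Relation.ReflTransGen (G.induce Sᶜ).Adj uu ww →
        ((reduceG G v).induce S'ᶜ).Reachable (φ uu) (φ ww) := by
      intro uu ww hchain
      induction hchain with
      | refl => exact SimpleGraph.Reachable.refl _
      | tail _ h2 ih2 => exact ih2.trans (hstep _ _ h2)
    have hres := main _ _ hr
    have hp : φ ⟨p.1.1, hback p⟩ = p := by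
      simp only [φ, dif_neg p.1.2]
    have hq : φ ⟨q.1.1, hback q⟩ = q := by
      simp only [φ, dif_neg q.1.2]
    rwa [hp, hq] at hres

private lemma reduceG_triangle (G : SimpleGraph V) (v a b c : V)
    (hab : a ≠ b) (hac : a ≠ c) (hbc : b ≠ c)
    (hmem : ∀ x, G.Adj v x ↔ (x = a ∨ x = b ∨ x = c))
    (htri : EveryEdgeInTriangle G) :
    EveryEdgeInTriangle (reduceG G v) := by
  have third : ∀ x y : V, G.Adj v x → G.Adj v y → x ≠ y →
      ∃ t, G.Adj v t ∧ t ≠ x ∧ t ≠ y := by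
    intro x y hx hy hxy
    have hA : G.Adj v a := (hmem a).mpr (Or.inl rfl)
    have hB : G.Adj v b := (hmem b).mpr (Or.inr (Or.inl rfl))
    have hC : G.Adj v c := (hmem c).mpr (Or.inr (Or.inr rfl))
    rcases (hmem x).mp hx with rfl | rfl | rfl <;>
      rcases (hmem y).mp hy with rfl | rfl | rfl
    · exact absurd rfl hxy
    · exact ⟨c, hC, hac.symm, hbc.symm⟩
    · exact ⟨b, hB, hab.symm, hbc⟩
    · exact ⟨c, hC, hbc.symm, hac.symm⟩
    · exact absurd rfl hxy
    · exact ⟨a, hA, hab, hac⟩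
    · exact ⟨b, hB, hbc, hab.symm⟩
    · exact ⟨a, hA, hac, hab⟩
    · exact absurd rfl hxy
  intro x y hxy
  obtain ⟨hor, hne⟩ := hxy
  rcases hor with hold | ⟨hvx, hvy⟩
  · obtain ⟨w, hxw, hyw⟩ := htri hold
    by_cases hwv : w = v
    · have hxv : G.Adj v x.1 := (hwv ▸ hxw).symm
      have hyv : G.Adj v y.1 := (hwv ▸ hyw).symm
      obtain ⟨t, hvt, htx, hty⟩ := third x.1 y.1 hxv hyv hne
      have htv : t ≠ v := fun h => G.loopless.irrefl v (h ▸ hvt)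
      exact ⟨⟨t, htv⟩, ⟨Or.inr ⟨hxv, hvt⟩, htx.symm⟩, ⟨Or.inr ⟨hyv, hvt⟩, hty.symm⟩⟩
    · exact ⟨⟨w, hwv⟩, ⟨Or.inl hxw, hxw.ne⟩, ⟨Or.inl hyw, hyw.ne⟩⟩
  · obtain ⟨t, hvt, htx, hty⟩ := third x.1 y.1 hvx hvy hne
    have htv : t ≠ v := fun h => G.loopless.irrefl v (h ▸ hvt)
    exact ⟨⟨t, htv⟩, ⟨Or.inr ⟨hvx, hvt⟩, htx.symm⟩, ⟨Or.inr ⟨hvy, hvt⟩, hty.symm⟩⟩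

private lemma reduceG_edges (G : SimpleGraph V) [Fintype V] [DecidableEq V]
    [DecidableRel G.Adj] (v a b c : V)
    (hab : a ≠ b) (hac : a ≠ c) (hbc : b ≠ c)
    (hmem : ∀ x, G.Adj v x ↔ (x = a ∨ x = b ∨ x = c))
    (hdeg : G.degree v = 3)
    (htri : EveryEdgeInTriangle G) :
    Nat.card (reduceG G v).edgeSet + 2 ≤ Nat.card G.edgeSet := by
  classical
  set ψ : Sym2 {x : V // x ≠ v} → Sym2 V := Sym2.map (fun x => (x : V)) with hψdef
  have hinj : Function.Injective ψ := Sym2.map.injective Subtype.val_injective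
  set B : Set (Sym2 V) := {e | e ∈ G.edgeSet ∧ v ∉ e} with hBdef
  set M : Set (Sym2 V) :=
    {e | ∃ x y : V, e = s(x, y) ∧ G.Adj v x ∧ G.Adj v y ∧ x ≠ y ∧ ¬ G.Adj x y} with hMdef
  have hsub : ψ '' (reduceG G v).edgeSet ⊆ B ∪ M := by
    rintro e ⟨e', he', rfl⟩
    induction e' using Sym2.ind with
    | _ x y =>
      rw [SimpleGraph.mem_edgeSet] at he'
      obtain ⟨hor, hne⟩ := he'
      have hmap : ψ s(x, y) = s(x.1, y.1) := by simp [hψdef]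
      rw [hmap]
      by_cases hxy : G.Adj x.1 y.1
      · left
        refine ⟨hxy, ?_⟩
        rw [Sym2.mem_iff]
        rintro (h | h)
        · exact x.2 h.symm
        · exact y.2 h.symm
      · right
        rcases hor with h | ⟨h1, h2⟩
        · exact absurd h hxy
        · exact ⟨x.1, y.1, rfl, h1, h2, hne, hxy⟩
  -- among {a,b,c} at least two edges, so M is a subsingleton
  have hA : G.Adj v a := (hmem a).mpr (Or.inl rfl)
  have hB' : G.Adj v b := (hmem b).mpr (Or.inr (Or.inl rfl))
  have hC : G.Adj v c := (hmem c).mpr (Or.inr (Or.inr rfl))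
  have nbr : ∀ x : V, G.Adj v x → (G.Adj x a ∨ G.Adj x b ∨ G.Adj x c) ∧ True := by
    intro x hx
    refine ⟨?_, trivial⟩
    obtain ⟨w, hvw, hxw⟩ := htri hx
    rcases (hmem w).mp hvw with rfl | rfl | rfl
    · exact Or.inl hxw
    · exact Or.inr (Or.inl hxw)
    · exact Or.inr (Or.inr hxw)
  have ta : G.Adj a b ∨ G.Adj a c := by
    rcases (nbr a hA).1 with h | h | h
    · exact absurd h (G.loopless.irrefl a)
    · exact Or.inl h
    · exact Or.inr h
  have tb : G.Adj b a ∨ G.Adj b c := by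
    rcases (nbr b hB').1 with h | h | h
    · exact Or.inl h
    · exact absurd h (G.loopless.irrefl b)
    · exact Or.inr h
  have tc : G.Adj c a ∨ G.Adj c b := by
    rcases (nbr c hC).1 with h | h | h
    · exact Or.inl h
    · exact Or.inr h
    · exact absurd h (G.loopless.irrefl c)
  have H23 : (G.Adj a b ∧ G.Adj a c) ∨ (G.Adj a b ∧ G.Adj b c) ∨ (G.Adj a c ∧ G.Adj b c) := by
    by_cases hab' : G.Adj a b
    · rcases tc with h | h
      · exact Or.inl ⟨hab', h.symm⟩
      · exact Or.inr (Or.inl ⟨hab', h.symm⟩)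
    · have hac' : G.Adj a c := ta.resolve_left hab'
      have hbc' : G.Adj b c := tb.resolve_left (fun h => hab' h.symm)
      exact Or.inr (Or.inr ⟨hac', hbc'⟩)
  have hM : ∃ e₀ : Sym2 V, M ⊆ {e₀} := by
    rcases H23 with ⟨h1, h2⟩ | ⟨h1, h2⟩ | ⟨h1, h2⟩
    · refine ⟨s(b, c), ?_⟩
      rintro e ⟨x, y, rfl, hvx, hvy, hxy, hnadj⟩
      simp only [Set.mem_singleton_iff]
      rcases (hmem x).mp hvx with rfl | rfl | rfl <;>
        rcases (hmem y).mp hvy with rfl | rfl | rfl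
      · exact absurd rfl hxy
      · exact absurd h1 hnadj
      · exact absurd h2 hnadj
      · exact absurd h1.symm hnadj
      · exact absurd rfl hxy
      · rfl
      · exact absurd h2.symm hnadj
      · exact Sym2.eq_swap
      · exact absurd rfl hxy
    · refine ⟨s(a, c), ?_⟩
      rintro e ⟨x, y, rfl, hvx, hvy, hxy, hnadj⟩
      simp only [Set.mem_singleton_iff]
      rcases (hmem x).mp hvx with rfl | rfl | rfl <;>
        rcases (hmem y).mp hvy with rfl | rfl | rfl
      · exact absurd rfl hxy
      · exact absurd h1 hnadj
      · rfl
      · exact absurd h1.symm hnadj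
      · exact absurd rfl hxy
      · exact absurd h2 hnadj
      · exact Sym2.eq_swap
      · exact absurd h2.symm hnadj
      · exact absurd rfl hxy
    · refine ⟨s(a, b), ?_⟩
      rintro e ⟨x, y, rfl, hvx, hvy, hxy, hnadj⟩
      simp only [Set.mem_singleton_iff]
      rcases (hmem x).mp hvx with rfl | rfl | rfl <;>
        rcases (hmem y).mp hvy with rfl | rfl | rfl
      · exact absurd rfl hxy
      · rfl
      · exact absurd h1 hnadj
      · exact Sym2.eq_swap
      · exact absurd rfl hxy
      · exact absurd h2 hnadj
      · exact absurd h1.symm hnadj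
      · exact absurd h2.symm hnadj
      · exact absurd rfl hxy
  obtain ⟨e₀, hMe⟩ := hM
  have hMcard : M.ncard ≤ 1 := by
    refine le_trans (Set.ncard_le_ncard hMe (Set.finite_singleton e₀)) ?_
    simp
  have h1 : Nat.card (reduceG G v).edgeSet = (ψ '' (reduceG G v).edgeSet).ncard := by
    rw [Nat.card_coe_set_eq, Set.ncard_image_of_injective _ hinj]
  have h2 : (ψ '' (reduceG G v).edgeSet).ncard ≤ B.ncard + 1 := by
    refine le_trans (Set.ncard_le_ncard hsub (Set.Finite.union (Set.toFinite B) (Set.toFinite M))) ?_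
    refine le_trans (Set.ncard_union_le _ _) ?_
    omega
  have hI : (G.incidenceSet v).ncard = 3 := by
    rw [Set.ncard_eq_toFinset_card', Set.toFinset_card]
    rw [SimpleGraph.card_incidenceSet_eq_degree]
    exact hdeg
  have hsplitset : G.edgeSet = G.incidenceSet v ∪ B := by
    ext e
    constructor
    · intro he
      by_cases hv : v ∈ e
      · exact Or.inl ⟨he, hv⟩
      · exact Or.inr ⟨he, hv⟩
    · rintro (⟨he, _⟩ | ⟨he, _⟩) <;> exact he
  have hdisj : Disjoint (G.incidenceSet v) B := by
    rw [Set.disjoint_left]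
    rintro e ⟨_, hv⟩ ⟨_, hnv⟩
    exact hnv hv
  have hsplit : Nat.card G.edgeSet = (G.incidenceSet v).ncard + B.ncard := by
    rw [Nat.card_coe_set_eq, hsplitset]
    exact Set.ncard_union_eq hdisj (Set.toFinite _) (Set.toFinite _)
  omega

private theorem aux3 : ∀ (n : ℕ) {V : Type u} (G : SimpleGraph V),
    Nat.card V = n → ThreeConnected G → EveryEdgeInTriangle G →
    2 * n - 2 ≤ Nat.card G.edgeSet := by
  intro n
  induction n using Nat.strong_induction_on with
  | _ n ih =>
  intro V G hn h3 htri
  have hn4 : 4 ≤ n := hn ▸ h3.1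
  have hfinV : Finite V := by
    by_contra h
    rw [not_finite_iff_infinite] at h
    rw [Nat.card_eq_zero_of_infinite] at hn
    omega
  haveI := Fintype.ofFinite V
  haveI : DecidableEq V := Classical.decEq V
  haveI : DecidableRel G.Adj := Classical.decRel _
  have hcardV : Fintype.card V = n := by rw [← Nat.card_eq_fintype_card, hn]
  rcases eq_or_lt_of_le hn4 with h4 | h5
  · -- base case n = 4 : complete graph
    have hadj : ∀ x y : V, x ≠ y → G.Adj x y := by
      intro x y hxy
      have hcS : ({x, y}ᶜ : Set V).ncard ≤ 2 := by
        have h1 : ({x, y} : Set V).ncard = 2 := Set.ncard_pair hxy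
        have h2 : ({x, y} : Set V).ncard + ({x, y}ᶜ : Set V).ncard = Nat.card V :=
          Set.ncard_add_ncard_compl _
        omega
      have hcon := h3.2 ({x, y}ᶜ : Set V) hcS
      have hxS : x ∈ ({x, y}ᶜ : Set V)ᶜ := by simp
      have hyS : y ∈ ({x, y}ᶜ : Set V)ᶜ := by simp
      have hr := hcon.preconnected ⟨x, hxS⟩ ⟨y, hyS⟩
      rw [SimpleGraph.reachable_iff_reflTransGen] at hr
      rcases hr.cases_head with heq | ⟨z, hadj1, _⟩
      · exact absurd (congrArg Subtype.val heq) hxy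
      · have hz : G.Adj x z.1 := hadj1
        have hzmem : z.1 ∈ ({x, y} : Set V) := by
          have := z.2
          simpa using this
        rcases hzmem with h | h
        · rw [h] at hz; exact absurd hz (G.loopless.irrefl x)
        · rw [h] at hz; exact hz
    have hdeg : ∀ u : V, 3 ≤ G.degree u := by
      intro u
      have hsub : Finset.univ.erase u ⊆ G.neighborFinset u := by
        intro w hw
        rw [Finset.mem_erase] at hw
        rw [SimpleGraph.mem_neighborFinset]
        exact (hadj w u hw.1).symm
      have h1 := Finset.card_le_card hsub
      rw [Finset.card_erase_of_mem (Finset.mem_univ u), Finset.card_univ, hcardV] at h1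
      have h2 : G.degree u = (G.neighborFinset u).card := rfl
      omega
    have := handshake_ge G 3 hdeg
    rw [hcardV] at this
    omega
  · -- n ≥ 5
    by_cases hdeg3 : ∃ v, G.degree v = 3
    · obtain ⟨v, hv⟩ := hdeg3
      obtain ⟨a, b, c, hab, hac, hbc, hN⟩ := Finset.card_eq_three.mp hv
      have hmem : ∀ x, G.Adj v x ↔ (x = a ∨ x = b ∨ x = c) := by
        intro x
        rw [← SimpleGraph.mem_neighborFinset, hN]
        simp
      -- cardinality of the subtype
      have hn' : Nat.card {x : V // x ≠ v} = n - 1 := by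
        have e1 : {x : V // x ≠ v} ≃ ↥({v}ᶜ : Set V) :=
          Equiv.subtypeEquivRight (by intro x; simp)
        rw [Nat.card_congr e1, Nat.card_coe_set_eq]
        have h2 : ({v} : Set V).ncard + ({v}ᶜ : Set V).ncard = Nat.card V :=
          Set.ncard_add_ncard_compl _
        rw [Set.ncard_singleton] at h2
        omega
      have hcard4 : 4 ≤ Nat.card {x : V // x ≠ v} := by omega
      have h3' := reduceG_threeConnected G h3 (by omega) v hcard4
      have htri' := reduceG_triangle G v a b c hab hac hbc hmem htri
      have hedge := reduceG_edges G v a b c hab hac hbc hmem hv htri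
      have ihres := ih (n - 1) (by omega) (reduceG G v) hn' h3' htri'
      omega
    · push_neg at hdeg3
      have hdeg : ∀ v, 4 ≤ G.degree v := by
        intro v
        have h1 := deg_ge_three G h3 v
        have h2 := hdeg3 v
        omega
      have := handshake_ge G 4 hdeg
      rw [hcardV] at this
      omega

end Statement3Proof

/-- A 3-connected graph of order `n` in which every edge lies in a triangle
has at least `2n - 2` edges. -/
theorem stmt_3 {V : Type*} (G : SimpleGraph V)
    (h3 : ThreeConnected G) (htri : EveryEdgeInTriangle G) :
    2 * Nat.card V - 2 ≤ numEdges G := by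
  exact aux3 (Nat.card V) G rfl h3 htri
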